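/- Every twice differentiable function f : ℝ → ℝ satisfying f''(x) = 8π(1 − exp(f(x))) for all x ∈ ℝ is periodic: there exists T > 0 such that f(x + T) = f(x) for all x ∈ ℝ. -/

import Mathlib

set_option maxHeartbeats 1000000

open Real Set Filter Topology

/-- A function with derivative tending to a positive limit cannot be bounded. -/
lemma drift_unbounded_pos {g g' : ℝ → ℝ} {d C : ℝ}
    (hg : ∀ x, HasDerivAt g (g' x) x)
    (hlim : Tendsto g' atTop (nhds d)) (hd : 0 < d)
    (hC : ∀ x, |g x| ≤ C) : False := by
  have h1 : ∀ᶠ x in atTop, d / 2 < g' x :=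
    hlim.eventually (eventually_gt_nhds (by linarith))
  obtain ⟨x₀, hx₀⟩ := eventually_atTop.1 h1
  have hCpos : 0 ≤ C := le_trans (abs_nonneg _) (hC x₀)
  set y := x₀ + (4 * C + 1) * (2 / d) with hy
  have hxy : x₀ ≤ y :=
    le_add_of_nonneg_right (by positivity)
  have key : d / 2 * (y - x₀) ≤ g y - g x₀ := by
    apply Convex.mul_sub_le_image_sub_of_le_deriv (convex_Ici x₀)
      (fun z _ => (hg z).continuousAt.continuousWithinAt)
      (fun z hz => ((hg z).differentiableAt).differentiableWithinAt)
      (fun z hz => ?_) x₀ (self_mem_Ici) y hxy hxy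
    rw [(hg z).deriv]
    rw [interior_Ici] at hz
    exact (hx₀ z (le_of_lt hz)).le
  have h2 : d / 2 * (y - x₀) = 4 * C + 1 := by
    rw [hy]; field_simp; ring
  obtain ⟨hy1, hy2⟩ := abs_le.1 (hC y)
  obtain ⟨hx1, hx2⟩ := abs_le.1 (hC x₀)
  linarith

lemma drift_unbounded {g g' : ℝ → ℝ} {d C : ℝ}
    (hg : ∀ x, HasDerivAt g (g' x) x)
    (hlim : Tendsto g' atTop (nhds d)) (hd : d ≠ 0)
    (hC : ∀ x, |g x| ≤ C) : False := by
  rcases hd.lt_or_gt with h | h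
  · exact drift_unbounded_pos (g := fun x => -g x) (fun x => (hg x).neg)
      (hlim.neg) (by linarith) (fun x => by rw [abs_neg]; exact hC x)
  · exact drift_unbounded_pos hg hlim h hC

/-- A continuous function with no zero on `[a, ∞)` that is positive at `a`
is positive on `[a, ∞)`. -/
lemma pos_on_Ici {g : ℝ → ℝ} (hg : Continuous g) {a : ℝ}
    (hne : ∀ x, a ≤ x → g x ≠ 0) (ha : 0 < g a) : ∀ x, a ≤ x → 0 < g x := by
  intro x hx
  rcases lt_trichotomy (g x) 0 with h | h | h
  · exfalso
    have h0 : (0:ℝ) ∈ Icc (g x) (g a) := ⟨h.le, ha.le⟩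
    have := intermediate_value_Icc' hx hg.continuousOn h0
    obtain ⟨c, hc, hc0⟩ := this
    exact hne c hc.1 hc0
  · exact absurd h (hne x hx)
  · exact h

/-- exp is Lipschitz on `[-M, M]` with constant `exp M`. -/
lemma exp_lip {M x y : ℝ} (hx : |x| ≤ M) (hy : |y| ≤ M) :
    |Real.exp x - Real.exp y| ≤ Real.exp M * |x - y| := by
  rw [abs_le] at hx hy
  have key : ∀ u v : ℝ, -M ≤ u → u ≤ v → v ≤ M →
      Real.exp v - Real.exp u ≤ Real.exp M * (v - u) := by
    intro u v hu huv hv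
    apply Convex.image_sub_le_mul_sub_of_deriv_le (convex_Icc (-M) M)
      Real.continuous_exp.continuousOn
      Real.differentiable_exp.differentiableOn
      (fun z hz => ?_) u ⟨hu, le_trans huv hv⟩ v ⟨le_trans hu huv, hv⟩ huv
    rw [Real.deriv_exp]
    rw [interior_Icc] at hz
    exact Real.exp_le_exp.2 hz.2.le
  rcases le_total x y with h | h
  · have hm := Real.exp_le_exp.2 h
    rw [abs_of_nonpos (by linarith), abs_of_nonpos (by linarith)]
    have := key x y hx.1 h hy.2
    linarith
  · have hm := Real.exp_le_exp.2 h
    rw [abs_of_nonneg (by linarith), abs_of_nonneg (by linarith)]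
    have := key y x hy.1 h hx.2
    linarith

/-- Every twice differentiable solution `f : ℝ → ℝ` of `f'' = 8π(1 − e^f)` on all
of `ℝ` is periodic: there is `T > 0` with `f(x + T) = f(x)` for all `x`. -/
theorem solution_periodic
    (f f' : ℝ → ℝ)
    (hf : ∀ x, HasDerivAt f (f' x) x)
    (hf' : ∀ x, HasDerivAt f' (8 * π * (1 - Real.exp (f x))) x) :
    ∃ T > 0, ∀ x, f (x + T) = f x := by
  have hπ : (0:ℝ) < π := Real.pi_pos
  have hfc : Continuous f := continuous_iff_continuousAt.2 fun x => (hf x).continuousAt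
  have hf'c : Continuous f' := continuous_iff_continuousAt.2 fun x => (hf' x).continuousAt
  -- conservation of energy
  set E₀ : ℝ := f' 0 ^ 2 / 2 + 8 * π * (Real.exp (f 0) - f 0 - 1) with hE₀def
  have hEd : ∀ x, HasDerivAt
      (fun x => f' x ^ 2 / 2 + 8 * π * (Real.exp (f x) - f x - 1)) 0 x := by
    intro x
    have h1 : HasDerivAt (fun x => f' x ^ 2 / 2)
        ((2 : ℕ) * f' x ^ 1 * (8 * π * (1 - Real.exp (f x))) / 2) x :=
      ((hf' x).pow 2).div_const 2
    have h2 : HasDerivAt (fun x => 8 * π * (Real.exp (f x) - f x - 1))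
        (8 * π * (Real.exp (f x) * f' x - f' x)) x := by
      exact ((((hf x).exp).sub (hf x)).sub_const 1).const_mul (8 * π)
    have h3 := h1.add h2
    refine h3.congr_deriv ?_
    push_cast
    ring
  have hener : ∀ x, f' x ^ 2 / 2 + 8 * π * (Real.exp (f x) - f x - 1) = E₀ := by
    intro x
    exact is_const_of_deriv_eq_zero (fun y => (hEd y).differentiableAt)
      (fun y => (hEd y).deriv) x 0
  clear_value E₀
  have hVpos : ∀ t : ℝ, 0 ≤ Real.exp t - t - 1 := fun t => by
    have := Real.add_one_le_exp t; linarith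
  have h8π : (0:ℝ) ≤ 8 * π := by positivity
  have hE₀nn : 0 ≤ E₀ := by
    have h1 := mul_nonneg h8π (hVpos (f 0))
    rw [hE₀def]
    linarith [sq_nonneg (f' 0)]
  have hf'sq : ∀ x, f' x ^ 2 ≤ 2 * E₀ := fun x => by
    have h := hener x
    have h1 := mul_nonneg h8π (hVpos (f x))
    linarith
  have hf'b : ∀ x, |f' x| ≤ Real.sqrt (2 * E₀) := fun x => Real.abs_le_sqrt (hf'sq x)
  set Mb : ℝ := E₀ / (8 * π) + 1 with hMbdef
  clear_value Mb
  have habs : ∀ t : ℝ, |t| ≤ Real.exp t - t := by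
    intro t
    rcases le_total t 0 with h | h
    · rw [abs_of_nonpos h]; have := (Real.exp_pos t).le; linarith
    · rw [abs_of_nonneg h]
      have h1 := Real.add_one_le_exp (t / 2)
      have h2 : Real.exp (t / 2) * Real.exp (t / 2) = Real.exp t := by
        rw [← Real.exp_add]; ring_nf
      nlinarith [sq_nonneg (1 - t / 2)]
  have hfb : ∀ x, |f x| ≤ Mb := by
    intro x
    have h := hener x
    have h2 := habs (f x)
    have h4 : 8 * π * (|f x| - 1) ≤ E₀ := by
      have h3 : 8 * π * (|f x| - 1) ≤ 8 * π * (Real.exp (f x) - f x - 1) :=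
        mul_le_mul_of_nonneg_left (by linarith) h8π
      linarith [sq_nonneg (f' x)]
    have h5 : |f x| - 1 ≤ E₀ / (8 * π) := (le_div_iff₀ (by positivity)).2 (by linarith)
    rw [hMbdef]; linarith
  -- the trivial case of zero energy
  rcases eq_or_lt_of_le hE₀nn with h0 | hE₀pos
  · refine ⟨1, one_pos, fun x => ?_⟩
    have hz : ∀ y, f' y = 0 := by
      intro y
      have h1 := hf'sq y
      rw [← h0] at h1
      nlinarith [sq_nonneg (f' y)]
    exact is_const_of_deriv_eq_zero (fun u => (hf u).differentiableAt)
      (fun u => by rw [(hf u).deriv, hz]) (x + 1) x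
  -- main case: positive energy.  First: f' vanishes on every ray [a, ∞)
  have hzero : ∀ a : ℝ, ∃ x, a ≤ x ∧ f' x = 0 := by
    intro a
    by_contra hcon
    push_neg at hcon
    set ε : ℝ := if 0 < f' a then 1 else -1 with hεdef
    have hε1 : ε = 1 ∨ ε = -1 := by rw [hεdef]; split <;> simp
    have hεne : ε ≠ 0 := by rcases hε1 with h | h <;> rw [h] <;> norm_num
    have hεsq : ε * ε = 1 := by rcases hε1 with h | h <;> rw [h] <;> norm_num
    have hεa : 0 < ε * f' a := by
      rw [hεdef]
      split
      next h => simpa using h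
      next h =>
        have hlt : f' a < 0 := lt_of_le_of_ne (not_lt.1 h) (hcon a le_rfl)
        rw [neg_one_mul]
        linarith
    have hεpos : ∀ x, a ≤ x → 0 < ε * f' x := by
      apply pos_on_Ici (continuous_const.mul hf'c) _ hεa
      intro x hx
      exact mul_ne_zero hεne (hcon x hx)
    have hmono : MonotoneOn (fun x => ε * f x) (Set.Ici a) := by
      apply monotoneOn_of_deriv_nonneg (convex_Ici a)
        (continuous_const.mul hfc).continuousOn
        (fun x _ => ((hf x).const_mul ε).differentiableAt.differentiableWithinAt)
      intro x hx
      rw [interior_Ici] at hx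
      change 0 ≤ deriv (fun y => ε * f y) x
      rw [((hf x).const_mul ε).deriv]
      exact (hεpos x hx.le).le
    set g : ℝ → ℝ := fun x => ε * f (max x a) with hgdef
    have hgmono : Monotone g := fun x y hxy =>
      hmono (Set.mem_Ici.2 (le_max_right x a)) (Set.mem_Ici.2 (le_max_right y a))
        (max_le_max hxy le_rfl)
    have hgbdd : BddAbove (Set.range g) := by
      refine ⟨Mb, ?_⟩
      rintro _ ⟨x, rfl⟩
      calc ε * f (max x a) ≤ |ε * f (max x a)| := le_abs_self _
        _ = |f (max x a)| := by
            rw [abs_mul]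
            rcases hε1 with h | h <;> rw [h] <;> simp
        _ ≤ Mb := hfb _
    have hgt := tendsto_atTop_ciSup hgmono hgbdd
    set L : ℝ := ε * ⨆ x, g x with hLdef
    clear_value L
    have hfL : Tendsto f atTop (nhds L) := by
      have h1 : Tendsto (fun x => ε * g x) atTop (nhds L) := by
        rw [hLdef]; exact hgt.const_mul ε
      apply h1.congr'
      filter_upwards [eventually_ge_atTop a] with x hx
      rw [hgdef]
      simp only
      rw [max_eq_left hx, ← mul_assoc, hεsq, one_mul]
    have hf''L : Tendsto (fun x => 8 * π * (1 - Real.exp (f x))) atTop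
        (nhds (8 * π * (1 - Real.exp L))) := by
      have h1 : Tendsto (fun x => Real.exp (f x)) atTop (nhds (Real.exp L)) :=
        (Real.continuous_exp.tendsto L).comp hfL
      exact (tendsto_const_nhds.sub h1).const_mul _
    by_cases hLe : Real.exp L = 1
    · have hL0 : L = 0 := (Real.exp_eq_one_iff L).mp hLe
      have hphi : Continuous (fun t : ℝ => 2 * E₀ - 2 * (8 * π * (Real.exp t - t - 1))) :=
        continuous_const.sub (continuous_const.mul (continuous_const.mul
          ((Real.continuous_exp.sub continuous_id).sub continuous_const)))
      have h2 := (hphi.tendsto L).comp hfL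
      have h3 : 2 * E₀ - 2 * (8 * π * (Real.exp L - L - 1)) = 2 * E₀ := by
        rw [hL0]; simp
      rw [h3] at h2
      have hsqlim : Tendsto (fun x => f' x ^ 2) atTop (nhds (2 * E₀)) := by
        apply h2.congr
        intro x
        have := hener x
        simp only [Function.comp]
        linarith
      have hsqrtlim : Tendsto (fun x => Real.sqrt (f' x ^ 2)) atTop
          (nhds (Real.sqrt (2 * E₀))) := (Real.continuous_sqrt.tendsto _).comp hsqlim
      have hflim' : Tendsto f' atTop (nhds (ε * Real.sqrt (2 * E₀))) := by
        have h4 : Tendsto (fun x => ε * Real.sqrt (f' x ^ 2)) atTop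
            (nhds (ε * Real.sqrt (2 * E₀))) := hsqrtlim.const_mul ε
        apply h4.congr'
        filter_upwards [eventually_ge_atTop a] with x hx
        have h5 : 0 < ε * f' x := hεpos x hx
        have h6 : |f' x| = ε * f' x := by
          rcases hε1 with h | h <;> rw [h] at h5 ⊢
          · rw [one_mul] at h5 ⊢; exact abs_of_pos h5
          · rw [neg_one_mul] at h5 ⊢
            rw [abs_of_neg (by linarith)]
        rw [Real.sqrt_sq_eq_abs, h6, ← mul_assoc, hεsq, one_mul]
      have hne : ε * Real.sqrt (2 * E₀) ≠ 0 :=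
        mul_ne_zero hεne (Real.sqrt_pos.2 (by linarith)).ne'
      exact drift_unbounded hf hflim' hne hfb
    · have hne : 8 * π * (1 - Real.exp L) ≠ 0 := by
        apply mul_ne_zero (by positivity)
        intro h
        exact hLe (by linarith [sub_eq_zero.1 h])
      exact drift_unbounded hf' hf''L hne hf'b
  -- symmetry about any critical point, via uniqueness of ODE solutions
  have hsym : ∀ c : ℝ, f' c = 0 → ∀ x, f (2 * c - x) = f x := by
    intro c hc
    set v : ℝ → ℝ × ℝ → ℝ × ℝ := fun _ p => (p.2, 8 * π * (1 - Real.exp p.1)) with hv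
    set s : ℝ → Set (ℝ × ℝ) := fun _ => {p : ℝ × ℝ | |p.1| ≤ Mb} with hs
    have hMb0 : 0 ≤ Mb := le_trans (abs_nonneg _) (hfb 0)
    set K : NNReal := ⟨1 + 8 * π * Real.exp Mb, by positivity⟩ with hK
    have hlip : ∀ t, LipschitzOnWith K (v t) (s t) := by
      intro t
      rw [lipschitzOnWith_iff_dist_le_mul]
      intro p hp q hq
      have hK' : (K : ℝ) = 1 + 8 * π * Real.exp Mb := rfl
      rw [Prod.dist_eq, Prod.dist_eq, hK']
      simp only [Real.dist_eq, hv]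
      have hrw : 8 * π * (1 - Real.exp p.1) - 8 * π * (1 - Real.exp q.1)
          = 8 * π * (Real.exp q.1 - Real.exp p.1) := by ring
      rw [hrw, abs_mul, abs_of_pos (show (0:ℝ) < 8 * π by positivity), abs_sub_comm (Real.exp q.1) (Real.exp p.1)]
      have hA : |p.1 - q.1| ≤ max |p.1 - q.1| |p.2 - q.2| := le_max_left _ _
      have hB : |p.2 - q.2| ≤ max |p.1 - q.1| |p.2 - q.2| := le_max_right _ _
      have hD0 : 0 ≤ max |p.1 - q.1| |p.2 - q.2| := le_trans (abs_nonneg _) hA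
      have h3 : |Real.exp p.1 - Real.exp q.1| ≤ Real.exp Mb * |p.1 - q.1| := exp_lip hp hq
      have hexp0 : 0 < Real.exp Mb := Real.exp_pos _
      apply max_le
      · nlinarith [mul_nonneg (mul_nonneg h8π hexp0.le) hD0]
      · nlinarith [mul_le_mul_of_nonneg_left h3 h8π,
          mul_le_mul_of_nonneg_left hA (mul_nonneg h8π hexp0.le), hD0]
    have hF : ∀ t, HasDerivAt (fun t => (f t, f' t)) (v t (f t, f' t)) t :=
      fun t => (hf t).prodMk (hf' t)
    have hG : ∀ t, HasDerivAt (fun t => (f (2 * c - t), -f' (2 * c - t)))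
        (v t (f (2 * c - t), -f' (2 * c - t))) t := by
      intro t
      have hi : HasDerivAt (fun t : ℝ => 2 * c - t) (-1) t := by
        simpa using (hasDerivAt_id t).const_sub (2 * c)
      have h1 : HasDerivAt (fun t => f (2 * c - t)) (f' (2 * c - t) * (-1)) t :=
        (hf (2 * c - t)).comp t hi
      have h2 : HasDerivAt (fun t => -f' (2 * c - t))
          (-(8 * π * (1 - Real.exp (f (2 * c - t))) * (-1))) t :=
        ((hf' (2 * c - t)).comp t hi).neg
      have h4 := h1.prodMk h2
      refine h4.congr_deriv ?_
      rw [hv]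
      simp only [Prod.mk.injEq]
      constructor <;> ring
    have key : ∀ x, c ≤ x → f x = f (2 * c - x) := by
      intro x hx
      have heq := ODE_solution_unique_of_mem_Icc_right (v := v) (s := s) (K := K) (fun t _ => hlip t)
        (f := fun t => (f t, f' t)) (g := fun t => (f (2 * c - t), -f' (2 * c - t)))
        (a := c) (b := x)
        ((hfc.prodMk hf'c).continuousOn)
        (fun t _ => (hF t).hasDerivWithinAt)
        (fun t _ => hfb t)
        (((hfc.comp (continuous_const.sub continuous_id)).prodMk ((hf'c.comp (continuous_const.sub continuous_id)).neg)).continuousOn)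
        (fun t _ => (hG t).hasDerivWithinAt)
        (fun t _ => hfb _)
        (by
          show (f c, f' c) = (f (2 * c - c), -f' (2 * c - c))
          rw [show 2 * c - c = c from by ring, hc, neg_zero])
      have h5 := heq (Set.right_mem_Icc.2 hx)
      exact congrArg Prod.fst h5
    intro x
    rcases le_total c x with h | h
    · exact (key x h).symm
    · have h2 := key (2 * c - x) (by linarith)
      rw [show 2 * c - (2 * c - x) = x from by ring] at h2
      exact h2
  obtain ⟨x₁, hx₁a, hx₁⟩ := hzero 0
  obtain ⟨x₂, hx₂a, hx₂⟩ := hzero (x₁ + 1)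
  refine ⟨2 * (x₂ - x₁), by linarith, fun x => ?_⟩
  have h1 := hsym x₂ hx₂ (2 * x₁ - x)
  have h2 := hsym x₁ hx₁ x
  rw [show x + 2 * (x₂ - x₁) = 2 * x₂ - (2 * x₁ - x) from by ring, h1, h2]
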